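/- For 0 < |q| < 1 and p = q^{2k} with k a nonzero integer, and any positive integer m, the exchange function 𝒴(x) = [∏_{s=1}^{2m-1} x²·ϑ_{q⁴}(x^{-2}p^s)ϑ_{q⁴}(x²q²p^s)/(ϑ_{q⁴}(x²p^s)ϑ_{q⁴}(x^{-2}q²p^s))]² equals 1 identically (on its domain of definition). -/

import Mathlib

open Complex Finset

/-- The q-Pochhammer infinite product `(x;a)_∞ = ∏_{n≥0} (1 - x aⁿ)`. -/
noncomputable def qPoch (x a : ℂ) : ℂ := ∏' n : ℕ, (1 - x * a ^ n)

/-- The Jacobi theta function `ϑ_a(x) = (x;a)_∞ (a x⁻¹;a)_∞ (a;a)_∞`. -/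
noncomputable def theta (a x : ℂ) : ℂ := qPoch x a * qPoch (a * x⁻¹) a * qPoch a a

/-- The exchange function `𝒴(x)` of eq. (2.10), for positive `m`. -/
noncomputable def Yexch (q p : ℂ) (m : ℕ) (x : ℂ) : ℂ :=
  (∏ s ∈ Finset.Icc 1 (2 * m - 1),
    x ^ 2 * theta (q ^ 4) (x⁻¹ ^ 2 * p ^ (s : ℤ)) * theta (q ^ 4) (x ^ 2 * q ^ 2 * p ^ (s : ℤ)) /
      (theta (q ^ 4) (x ^ 2 * p ^ (s : ℤ)) * theta (q ^ 4) (x⁻¹ ^ 2 * q ^ 2 * p ^ (s : ℤ)))) ^ 2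

lemma aux_hasProd_zero {f : ℕ → ℂ} (i : ℕ) (h : f i = 0) : HasProd f 0 := by
  have hev : ∀ᶠ s : Finset ℕ in Filter.atTop, ∏ b ∈ s, f b = 0 := by
    filter_upwards [Filter.eventually_ge_atTop ({i} : Finset ℕ)] with s hs
    exact Finset.prod_eq_zero (hs (Finset.mem_singleton_self i)) h
  exact Filter.Tendsto.congr' (hev.mono fun s hs => hs.symm) tendsto_const_nhds

set_option maxHeartbeats 1000000 in
lemma aux_mult (x a : ℂ) (ha : ‖a‖ < 1) : Multipliable fun n : ℕ => 1 - x * a ^ n := by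
  by_cases hz : ∃ i : ℕ, 1 - x * a ^ i = 0
  · obtain ⟨i, hi⟩ := hz
    exact ⟨0, aux_hasProd_zero i hi⟩
  · push_neg at hz
    have hsum : Summable fun n : ℕ => Complex.log (1 - x * a ^ n) := by
      apply Summable.of_norm_bounded_eventually_nat
        (g := fun n => 3 / 2 * (‖x‖ * ‖a‖ ^ n))
        (((summable_geometric_of_lt_one (norm_nonneg a) ha).mul_left ‖x‖).mul_left (3 / 2))
      have htend : Filter.Tendsto (fun n : ℕ => ‖x‖ * ‖a‖ ^ n) Filter.atTop (nhds 0) := by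
        simpa using (tendsto_pow_atTop_nhds_zero_of_lt_one
          (by positivity : (0:ℝ) ≤ ‖a‖) ha).const_mul ‖x‖
      filter_upwards [htend.eventually_le_const (by norm_num : (0:ℝ) < 1/2)] with n hn
      have harg : ‖-(x * a ^ n)‖ ≤ 1 / 2 := by
        rwa [norm_neg, norm_mul, norm_pow]
      calc ‖Complex.log (1 - x * a ^ n)‖
          = ‖Complex.log (1 + -(x * a ^ n))‖ := by rw [sub_eq_add_neg]
        _ ≤ 3 / 2 * ‖-(x * a ^ n)‖ := Complex.norm_log_one_add_half_le_self harg
        _ = 3 / 2 * (‖x‖ * ‖a‖ ^ n) := by rw [norm_neg, norm_mul, norm_pow]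
    exact Complex.multipliable_of_summable_log hsum

set_option maxHeartbeats 1000000 in
lemma qPoch_shift (x a : ℂ) (ha : ‖a‖ < 1) : qPoch x a = (1 - x) * qPoch (x * a) a := by
  unfold qPoch
  have hmult : Multipliable fun n : ℕ => 1 - x * a ^ (n + 1) :=
    (aux_mult (x * a) a ha).congr fun n => by rw [pow_succ]; ring_nf
  rw [tprod_eq_zero_mul' hmult]
  congr 1
  · simp
  · exact tprod_congr fun n => by rw [pow_succ]; ring_nf

lemma theta_inv (a y : ℂ) (ha : ‖a‖ < 1) (hy : y ≠ 0) :
    theta a y⁻¹ = -y⁻¹ * theta a y := by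
  unfold theta
  rw [inv_inv, qPoch_shift y⁻¹ a ha, qPoch_shift y a ha,
    show y⁻¹ * a = a * y⁻¹ by ring, show y * a = a * y by ring,
    show (1 : ℂ) - y⁻¹ = -y⁻¹ * (1 - y) by field_simp; ring]
  ring

lemma theta_shift (a y : ℂ) (ha : ‖a‖ < 1) (ha0 : a ≠ 0) (hy : y ≠ 0) :
    theta a (a * y) = -y⁻¹ * theta a y := by
  unfold theta
  rw [show a * (a * y)⁻¹ = y⁻¹ by field_simp,
    qPoch_shift y⁻¹ a ha, qPoch_shift y a ha,
    show y⁻¹ * a = a * y⁻¹ by ring, show y * a = a * y by ring,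
    show (1 : ℂ) - y⁻¹ = -y⁻¹ * (1 - y) by field_simp; ring]
  ring

theorem Y_eq_one_of_p_eq_q_pow (q p : ℂ) (hq0 : 0 < ‖q‖)
    (hq1 : ‖q‖ < 1) (k : ℤ) (hk : k ≠ 0) (hpq : p = q ^ (2 * k))
    (m : ℕ) (hm : 0 < m) (x : ℂ) (hx : x ≠ 0)
    (hden : ∀ s ∈ Finset.Icc 1 (2 * m - 1),
      theta (q ^ 4) (x ^ 2 * p ^ (s : ℤ)) ≠ 0 ∧
      theta (q ^ 4) (x⁻¹ ^ 2 * q ^ 2 * p ^ (s : ℤ)) ≠ 0) :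
    Yexch q p m x = 1 := by
  have hq : q ≠ 0 := by
    intro h; rw [h] at hq0; simp at hq0
  have hqn : ‖q‖ < 1 := hq1
  have ha : ‖q ^ 4‖ < 1 := by
    rw [norm_pow]; exact pow_lt_one₀ (norm_nonneg q) hqn (by norm_num)
  have ha0 : q ^ 4 ≠ 0 := pow_ne_zero _ hq
  have hq2 : q ^ 2 ≠ 0 := pow_ne_zero _ hq
  set X : ℂ := x ^ 2 with hXdef
  have hX : X ≠ 0 := pow_ne_zero _ hx
  have hXinv : x⁻¹ ^ 2 = X⁻¹ := by rw [inv_pow]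
  set T := theta (q ^ 4) with hT
  have hshift : ∀ y : ℂ, y ≠ 0 → T (q ^ 4 * y) = -y⁻¹ * T y :=
    fun y hy => theta_shift (q ^ 4) y ha ha0 hy
  have hinv : ∀ y : ℂ, y ≠ 0 → T y⁻¹ = -y⁻¹ * T y :=
    fun y hy => theta_inv (q ^ 4) y ha hy
  clear_value X T
  set H : ℤ → ℂ := fun N =>
    T (X⁻¹ * q ^ (2 * N)) * T (X * q ^ 2 * q ^ (2 * N)) +
      X⁻¹ * (T (X * q ^ (2 * N)) * T (X⁻¹ * q ^ 2 * q ^ (2 * N))) with hHdef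
  have hqz : ∀ n : ℤ, (q : ℂ) ^ n ≠ 0 := fun n => zpow_ne_zero n hq
  have hshift' : ∀ y : ℂ, y ≠ 0 → T y = -y * T (q ^ 4 * y) := by
    intro y hy
    rw [hshift y hy]
    linear_combination (-(T y)) * mul_inv_cancel₀ hy
  have h1 : X * X⁻¹ = 1 := mul_inv_cancel₀ hX
  -- the "flip" identity T(X⁻¹ q²) = T(X q²)
  have hflip : T (X⁻¹ * q ^ 2) = T (X * q ^ 2) := by
    have h1 : X⁻¹ * q ^ 2 = q ^ 4 * (X * q ^ 2)⁻¹ := by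
      field_simp
    rw [h1, hshift _ (inv_ne_zero (mul_ne_zero hX hq2)), inv_inv,
      hinv _ (mul_ne_zero hX hq2)]
    field_simp
  have hH0 : H 0 = 0 := by
    have e0 : (q : ℂ) ^ (2 * (0:ℤ)) = 1 := by norm_num
    simp only [hHdef, e0, mul_one]
    rw [hflip, hinv _ hX]
    ring
  have hH1 : H 1 = 0 := by
    have e1 : (q : ℂ) ^ (2 * (1:ℤ)) = q ^ 2 := by
      rw [show (2 * (1:ℤ)) = ((2:ℕ) : ℤ) by norm_num, zpow_natCast]
    simp only [hHdef, e1]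
    rw [show X * q ^ 2 * q ^ 2 = q ^ 4 * X by ring,
      show X⁻¹ * q ^ 2 * q ^ 2 = q ^ 4 * X⁻¹ by ring,
      hshift _ hX, hshift _ (inv_ne_zero hX), hflip, inv_inv, hinv _ hX]
    linear_combination X⁻¹ * T (X * q ^ 2) * T X * h1
  have hrec : ∀ N : ℤ, H N = q ^ (4 * N + 2) * H (N + 2) := by
    intro N
    have hq4 : (q : ℂ) ^ ((4:ℤ)) = q ^ 4 := by
      rw [show ((4:ℤ)) = ((4:ℕ) : ℤ) by norm_num, zpow_natCast]
    have e1 : X⁻¹ * q ^ (2 * (N + 2)) = q ^ 4 * (X⁻¹ * q ^ (2 * N)) := by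
      rw [show 2 * (N + 2) = 2 * N + 4 by ring, zpow_add₀ hq, hq4]; ring
    have e2 : X * q ^ 2 * q ^ (2 * (N + 2)) = q ^ 4 * (X * q ^ 2 * q ^ (2 * N)) := by
      rw [show 2 * (N + 2) = 2 * N + 4 by ring, zpow_add₀ hq, hq4]; ring
    have e3 : X * q ^ (2 * (N + 2)) = q ^ 4 * (X * q ^ (2 * N)) := by
      rw [show 2 * (N + 2) = 2 * N + 4 by ring, zpow_add₀ hq, hq4]; ring
    have e4 : X⁻¹ * q ^ 2 * q ^ (2 * (N + 2)) = q ^ 4 * (X⁻¹ * q ^ 2 * q ^ (2 * N)) := by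
      rw [show 2 * (N + 2) = 2 * N + 4 by ring, zpow_add₀ hq, hq4]; ring
    have hu : (q : ℂ) ^ (2 * N) ≠ 0 := hqz _
    have hpow : (q : ℂ) ^ (4 * N + 2) = q ^ (2 * N) * q ^ (2 * N) * q ^ 2 := by
      rw [show 4 * N + 2 = 2 * N + (2 * N + 2) by ring, zpow_add₀ hq, zpow_add₀ hq,
        show ((2:ℤ)) = ((2:ℕ) : ℤ) by norm_num, zpow_natCast]
      ring
    simp only [hHdef]
    rw [hshift' _ (mul_ne_zero (inv_ne_zero hX) hu),
      hshift' _ (mul_ne_zero (mul_ne_zero hX hq2) hu),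
      hshift' _ (mul_ne_zero hX hu),
      hshift' _ (mul_ne_zero (mul_ne_zero (inv_ne_zero hX) hq2) hu),
      ← e1, ← e2, ← e3, ← e4, hpow]
    linear_combination (q ^ (2 * N) * q ^ (2 * N) * q ^ 2 *
      (T (X⁻¹ * q ^ (2 * (N + 2))) * T (X * q ^ 2 * q ^ (2 * (N + 2))) +
        X⁻¹ * (T (X * q ^ (2 * (N + 2))) * T (X⁻¹ * q ^ 2 * q ^ (2 * (N + 2)))))) * h1
  have hHall : ∀ N : ℤ, H N = 0 := by
    have key : ∀ N : ℤ, H N = 0 ∧ H (N + 1) = 0 := by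
      intro N
      induction N using Int.induction_on with
      | zero => exact ⟨hH0, by rw [show (0:ℤ) + 1 = 1 by ring]; exact hH1⟩
      | succ n ih =>
        refine ⟨ih.2, ?_⟩
        have h0 := hrec n
        rw [ih.1] at h0
        have h2 : H ((n : ℤ) + 2) = 0 := by
          rcases mul_eq_zero.mp h0.symm with h | h
          · exact absurd h (hqz _)
          · exact h
        rwa [show ((n : ℤ) + 1) + 1 = (n : ℤ) + 2 by ring]
      | pred n ih =>
        constructor
        · have h0 := hrec (-(n : ℤ) - 1)
          rw [show (-(n:ℤ) - 1) + 2 = -(n:ℤ) + 1 by ring, ih.2, mul_zero] at h0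
          exact h0
        · rw [show (-(n:ℤ) - 1) + 1 = -(n:ℤ) by ring]
          exact ih.1
    exact fun N => (key N).1
  have hps : ∀ s : ℕ, p ^ (s : ℤ) = q ^ (2 * (k * (s:ℤ))) := by
    intro s
    rw [hpq, ← zpow_mul]
    congr 1
    ring
  have hfac : ∀ s ∈ Finset.Icc 1 (2 * m - 1),
      x ^ 2 * theta (q ^ 4) (x⁻¹ ^ 2 * p ^ (s : ℤ)) * theta (q ^ 4) (x ^ 2 * q ^ 2 * p ^ (s : ℤ)) /
        (theta (q ^ 4) (x ^ 2 * p ^ (s : ℤ)) * theta (q ^ 4) (x⁻¹ ^ 2 * q ^ 2 * p ^ (s : ℤ)))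
        = -1 := by
    intro s hs
    obtain ⟨hd1, hd2⟩ := hden s hs
    rw [hps s] at hd1 hd2 ⊢
    rw [hXinv] at hd2 ⊢
    rw [← hXdef, ← hT]
    have hH := hHall (k * (s : ℤ))
    simp only [hHdef] at hH
    set A := T (X⁻¹ * q ^ (2 * (k * (s:ℤ)))) with hA
    set B := T (X * q ^ 2 * q ^ (2 * (k * (s:ℤ)))) with hB
    set C := T (X * q ^ (2 * (k * (s:ℤ)))) with hC
    set D := T (X⁻¹ * q ^ 2 * q ^ (2 * (k * (s:ℤ)))) with hD
    have hCD : C * D ≠ 0 := mul_ne_zero hd1 hd2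
    have hnum : X * A * B = -(C * D) := by
      linear_combination X * hH - (C * D) * h1
    rw [hnum, neg_div, div_self hCD]
  unfold Yexch
  rw [Finset.prod_congr rfl hfac, Finset.prod_const, Nat.card_Icc]
  have hodd : Odd (2 * m - 1 + 1 - 1) := ⟨m - 1, by omega⟩
  rw [hodd.neg_one_pow, neg_one_sq]
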